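/- Fix an integer k ≥ 2. Assume that there are two players with preferences ≽^sing_1 and ≽^sing_2 on the single items of a set S of m items. Then there exists a subset T ⊆ S with |T| ≤ ⌈(m+k−1)/k⌉ such that T is necessarily worth at least 1/k with respect to both ≽^sing_1 and ≽^sing_2. -/

import Mathlib

open Finset

/-- A preference on subsets: a complete (total, hence reflexive) and transitive relation. -/
def IsPref {m : ℕ} (R : Finset (Fin m) → Finset (Fin m) → Prop) : Prop :=
  (∀ A B, R A B ∨ R B A) ∧ ∀ A B C, R A B → R B C → R A C

/-- A preference on single items: a complete and transitive relation. -/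
def IsSingPref {m : ℕ} (Rs : Fin m → Fin m → Prop) : Prop :=
  (∀ x y, Rs x y ∨ Rs y x) ∧ ∀ x y z, Rs x y → Rs y z → Rs x z

/-- A preference is monotonic if `T ∪ {x} ≽ T` for every subset `T` and item `x`. -/
def MonotonicPref {m : ℕ} (R : Finset (Fin m) → Finset (Fin m) → Prop) : Prop :=
  ∀ (T : Finset (Fin m)) (x : Fin m), R (insert x T) T

/-- A preference on subsets is responsive w.r.t. a preference `Rs` on single items if it is
monotonic and `(T \ {y}) ∪ {x} ≽ T` whenever `x ∉ T`, `y ∈ T` and `x ≽ˢ y`. -/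
def Responsive {m : ℕ} (Rs : Fin m → Fin m → Prop)
    (R : Finset (Fin m) → Finset (Fin m) → Prop) : Prop :=
  MonotonicPref R ∧
    ∀ (T : Finset (Fin m)) (x y : Fin m),
      x ∉ T → y ∈ T → Rs x y → R (insert x (T.erase y)) T

/-- A preference on subsets is consistent with a preference on single items if its
restriction to singletons agrees with it. -/
def Consistent {m : ℕ} (Rs : Fin m → Fin m → Prop)
    (R : Finset (Fin m) → Finset (Fin m) → Prop) : Prop :=
  ∀ x y : Fin m, R {x} {y} ↔ Rs x y

/-- `T` is necessarily agreeable w.r.t. `Rs` if `T ≽ Tᶜ` for every responsive preference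
consistent with `Rs`. -/
def NecAgreeable {m : ℕ} (Rs : Fin m → Fin m → Prop) (T : Finset (Fin m)) : Prop :=
  ∀ R : Finset (Fin m) → Finset (Fin m) → Prop,
    IsPref R → Responsive Rs R → Consistent Rs R → R T Tᶜ

/-- `T` is possibly agreeable w.r.t. `Rs` if `T ≻ Tᶜ` for some responsive preference
consistent with `Rs`. -/
def PossAgreeable {m : ℕ} (Rs : Fin m → Fin m → Prop) (T : Finset (Fin m)) : Prop :=
  ∃ R : Finset (Fin m) → Finset (Fin m) → Prop,
    IsPref R ∧ Responsive Rs R ∧ Consistent Rs R ∧ R T Tᶜ ∧ ¬ R Tᶜ T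

/-- `T` is necessarily worth at least `1/k` w.r.t. `Rs`: the complement `Tᶜ` can be
partitioned into `k − 1` sets `T_1,…,T_{k−1}` with `T ≽ T_i` for all `i` and every
responsive preference `≽` consistent with `Rs`. -/
def NecWorth {m : ℕ} (k : ℕ) (Rs : Fin m → Fin m → Prop) (T : Finset (Fin m)) : Prop :=
  ∃ P : Fin (k - 1) → Finset (Fin m),
    (∀ i j, i ≠ j → Disjoint (P i) (P j)) ∧
    Finset.univ.biUnion P = Tᶜ ∧
    ∀ (i : Fin (k - 1)) (R : Finset (Fin m) → Finset (Fin m) → Prop),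
      IsPref R → Responsive Rs R → Consistent Rs R → R T (P i)

section Aux
variable {m : ℕ}

lemma pref_refl {R : Finset (Fin m) → Finset (Fin m) → Prop} (hR : IsPref R)
    (A : Finset (Fin m)) : R A A := (hR.1 A A).elim id id

lemma sing_refl {Rs : Fin m → Fin m → Prop} (hs : IsSingPref Rs) (a : Fin m) : Rs a a :=
  (hs.1 a a).elim id id

lemma pref_subset {R : Finset (Fin m) → Finset (Fin m) → Prop} (hR : IsPref R)
    (hM : MonotonicPref R) :
    ∀ (n : ℕ) (B A : Finset (Fin m)), B ⊆ A → (A \ B).card ≤ n → R A B := by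
  intro n
  induction n with
  | zero =>
    intro B A hBA hc
    have : A \ B = ∅ := Finset.card_eq_zero.mp (Nat.le_zero.mp hc)
    have : A = B := Finset.Subset.antisymm (fun x hx => by
      by_contra hxB
      exact absurd (Finset.mem_sdiff.mpr ⟨hx, hxB⟩) (by simp [this])) hBA
    rw [this]; exact pref_refl hR B
  | succ n ih =>
    intro B A hBA hc
    by_cases hAB : A \ B = ∅
    · have : A = B := Finset.Subset.antisymm (fun x hx => by
        by_contra hxB
        exact absurd (Finset.mem_sdiff.mpr ⟨hx, hxB⟩) (by simp [hAB])) hBA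
      rw [this]; exact pref_refl hR B
    · obtain ⟨x, hx⟩ := Finset.nonempty_iff_ne_empty.mpr hAB
      rw [Finset.mem_sdiff] at hx
      have h1 : R (insert x B) B := hM B x
      have hsub : insert x B ⊆ A := Finset.insert_subset hx.1 hBA
      have hcard : (A \ insert x B).card ≤ n := by
        have : A \ insert x B = (A \ B).erase x := by
          ext z; simp [Finset.mem_sdiff, Finset.mem_erase]; tauto
        rw [this, Finset.card_erase_of_mem (Finset.mem_sdiff.mpr hx)]
        omega
      exact hR.2 _ _ _ (ih (insert x B) A hsub hcard) h1

lemma pref_swap {Rs : Fin m → Fin m → Prop} (hs : IsSingPref Rs)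
    {R : Finset (Fin m) → Finset (Fin m) → Prop} (hR : IsPref R) (hresp : Responsive Rs R) :
    ∀ (n : ℕ) (V : Finset (Fin m)) (g : Fin m → Fin m) (A : Finset (Fin m)),
      (V.filter (fun z => g z ≠ z)).card ≤ n →
      (∀ y ∈ V, g y ∈ A) → Set.InjOn g ↑V → (∀ y ∈ V, Rs (g y) y) →
      (∀ y ∈ V, g y ≠ y → g y ∉ V) → R A V := by
  intro n
  induction n with
  | zero =>
    intro V g A hc hgA hinj hdom hout
    have hfix : ∀ y ∈ V, g y = y := by
      intro y hy
      by_contra hne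
      have hyf : y ∈ V.filter (fun z => g z ≠ z) := Finset.mem_filter.mpr ⟨hy, hne⟩
      have := Finset.card_pos.mpr ⟨y, hyf⟩
      omega
    have hVA : V ⊆ A := fun y hy => by rw [← hfix y hy]; exact hgA y hy
    exact pref_subset hR hresp.1 A.card V A hVA (Nat.le_of_lt_succ (Nat.lt_succ_of_le
      (Finset.card_le_card (Finset.sdiff_subset))))
  | succ n ih =>
    intro V g A hc hgA hinj hdom hout
    by_cases hfe : V.filter (fun z => g z ≠ z) = ∅
    · have hfix : ∀ y ∈ V, g y = y := by
        intro y hy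
        by_contra hne
        have hyf : y ∈ V.filter (fun z => g z ≠ z) := Finset.mem_filter.mpr ⟨hy, hne⟩
        rw [hfe] at hyf
        simp at hyf
      have hVA : V ⊆ A := fun y hy => by rw [← hfix y hy]; exact hgA y hy
      exact pref_subset hR hresp.1 A.card V A hVA (Nat.le_of_lt_succ (Nat.lt_succ_of_le
        (Finset.card_le_card (Finset.sdiff_subset))))
    · obtain ⟨y, hy⟩ := Finset.nonempty_iff_ne_empty.mpr hfe
      rw [Finset.mem_filter] at hy
      obtain ⟨hyV, hne⟩ := hy
      have hgyV : g y ∉ V := hout y hyV hne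
      -- swap step
      have hstep : R (insert (g y) (V.erase y)) V := hresp.2 V (g y) y hgyV hyV (hdom y hyV)
      set V' := insert (g y) (V.erase y) with hV'
      classical
      set g' := Function.update g (g y) (g y) with hg'
      have hmemV' : ∀ z, z ∈ V' ↔ z = g y ∨ (z ∈ V ∧ z ≠ y) := by
        intro z; simp [hV', Finset.mem_insert, Finset.mem_erase]; tauto
      have hg'z : ∀ z ∈ V.erase y, g' z = g z := by
        intro z hz
        rw [Finset.mem_erase] at hz
        have : z ≠ g y := fun h => hgyV (h ▸ hz.2)
        simp [hg', Function.update_of_ne this]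
      have hrec : R A V' := by
        apply ih V' g' A
        · -- card bound
          have hsub : V'.filter (fun z => g' z ≠ z) ⊆ (V.filter (fun z => g z ≠ z)).erase y := by
            intro z hz
            rw [Finset.mem_filter] at hz
            obtain ⟨hzV', hzne⟩ := hz
            rcases (hmemV' z).mp hzV' with h | ⟨hzV, hzy⟩
            · exfalso; apply hzne; rw [h]; simp [hg']
            · rw [Finset.mem_erase]
              refine ⟨hzy, Finset.mem_filter.mpr ⟨hzV, ?_⟩⟩
              rwa [hg'z z (Finset.mem_erase.mpr ⟨hzy, hzV⟩)] at hzne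
          have hle := Finset.card_le_card hsub
          have hyf : y ∈ V.filter (fun z => g z ≠ z) := Finset.mem_filter.mpr ⟨hyV, hne⟩
          have her := Finset.card_erase_of_mem hyf
          omega
        · intro z hz
          rcases (hmemV' z).mp hz with h | ⟨hzV, hzy⟩
          · rw [h]; simp [hg']; exact hgA y hyV
          · rw [hg'z z (Finset.mem_erase.mpr ⟨hzy, hzV⟩)]; exact hgA z hzV
        · intro a ha b hb hab
          rcases (hmemV' a).mp (by exact_mod_cast ha) with h1 | ⟨haV, hay⟩ <;>
            rcases (hmemV' b).mp (by exact_mod_cast hb) with h2 | ⟨hbV, hby⟩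
          · rw [h1, h2]
          · exfalso
            rw [hg'z b (Finset.mem_erase.mpr ⟨hby, hbV⟩), h1, hg',
              Function.update_self] at hab
            exact hby (hinj (Finset.mem_coe.mpr hbV) (Finset.mem_coe.mpr hyV) hab.symm)
          · exfalso
            rw [hg'z a (Finset.mem_erase.mpr ⟨hay, haV⟩), h2, hg',
              Function.update_self] at hab
            exact hay (hinj (Finset.mem_coe.mpr haV) (Finset.mem_coe.mpr hyV) hab)
          · rw [hg'z a (Finset.mem_erase.mpr ⟨hay, haV⟩),
              hg'z b (Finset.mem_erase.mpr ⟨hby, hbV⟩)] at hab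
            exact hinj (Finset.mem_coe.mpr haV) (Finset.mem_coe.mpr hbV) hab
        · intro z hz
          rcases (hmemV' z).mp hz with h | ⟨hzV, hzy⟩
          · rw [h]; simp [hg']; exact sing_refl hs (g y)
          · rw [hg'z z (Finset.mem_erase.mpr ⟨hzy, hzV⟩)]; exact hdom z hzV
        · intro z hz hzne
          rcases (hmemV' z).mp hz with h | ⟨hzV, hzy⟩
          · exfalso; apply hzne; rw [h]; simp [hg']
          · rw [hg'z z (Finset.mem_erase.mpr ⟨hzy, hzV⟩)] at hzne ⊢
            have hgV : g z ∉ V := hout z hzV hzne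
            intro hmem
            rcases (hmemV' (g z)).mp hmem with h | ⟨h, _⟩
            · exact hzy (hinj hzV hyV h)
            · exact hgV h
      exact hR.2 _ _ _ hrec hstep

lemma nec_of_inj {Rs : Fin m → Fin m → Prop} (hs : IsSingPref Rs)
    {T V : Finset (Fin m)} (hdis : ∀ y ∈ V, y ∉ T)
    (g : Fin m → Fin m) (hgT : ∀ y ∈ V, g y ∈ T) (hinj : Set.InjOn g ↑V)
    (hdom : ∀ y ∈ V, Rs (g y) y) :
    ∀ R : Finset (Fin m) → Finset (Fin m) → Prop,
      IsPref R → Responsive Rs R → Consistent Rs R → R T V := by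
  intro R hR hresp _
  apply pref_swap hs hR hresp (V.filter (fun z => g z ≠ z)).card V g T le_rfl hgT hinj hdom
  intro y hy _ hgyV
  exact hdis (g y) hgyV (hgT y hy)

lemma exists_max {Rs : Fin m → Fin m → Prop} (hs : IsSingPref Rs) (s : Finset (Fin m))
    (h : s.Nonempty) : ∃ a ∈ s, ∀ b ∈ s, Rs a b := by
  classical
  induction s using Finset.induction_on with
  | empty => exact absurd h (by simp)
  | @insert x s hxs ih =>
    by_cases hse : s.Nonempty
    · obtain ⟨a, ha, hmax⟩ := ih hse
      rcases hs.1 a x with hax | hxa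
      · exact ⟨a, Finset.mem_insert_of_mem ha, fun b hb => by
          rcases Finset.mem_insert.mp hb with rfl | hb
          · exact hax
          · exact hmax b hb⟩
      · exact ⟨x, Finset.mem_insert_self x s, fun b hb => by
          rcases Finset.mem_insert.mp hb with rfl | hb
          · exact sing_refl hs b
          · exact hs.2 _ _ _ hxa (hmax b hb)⟩
    · have : s = ∅ := Finset.not_nonempty_iff_eq_empty.mp hse
      subst this
      exact ⟨x, Finset.mem_insert_self x ∅, fun b hb => by
        rcases Finset.mem_insert.mp hb with rfl | hb
        · exact sing_refl hs b
        · simp at hb⟩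

lemma rank_lt_of_mem {L : Finset (Fin m)} {x : Fin m} (hx : x ∈ L) :
    (L.filter (fun y => y < x)).card < L.card := by
  apply Finset.card_lt_card
  constructor
  · exact Finset.filter_subset _ _
  · intro h
    exact absurd (Finset.mem_filter.mp (h hx)).2 (lt_irrefl x)

lemma rank_inj {L : Finset (Fin m)} {x y : Fin m} (hx : x ∈ L) (hy : y ∈ L)
    (h : (L.filter (fun z => z < x)).card = (L.filter (fun z => z < y)).card) : x = y := by
  rcases lt_trichotomy x y with hlt | heq | hgt
  · exfalso
    have hss : L.filter (fun z => z < x) ⊂ L.filter (fun z => z < y) := by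
      constructor
      · intro z hz
        rw [Finset.mem_filter] at hz ⊢
        exact ⟨hz.1, lt_trans hz.2 hlt⟩
      · intro hsub
        exact absurd (Finset.mem_filter.mp (hsub (Finset.mem_filter.mpr ⟨hx, hlt⟩))).2
          (lt_irrefl x)
    exact absurd h (Nat.ne_of_lt (Finset.card_lt_card hss))
  · exact heq
  · exfalso
    have hss : L.filter (fun z => z < y) ⊂ L.filter (fun z => z < x) := by
      constructor
      · intro z hz
        rw [Finset.mem_filter] at hz ⊢
        exact ⟨hz.1, lt_trans hz.2 hgt⟩
      · intro hsub
        exact absurd (Finset.mem_filter.mp (hsub (Finset.mem_filter.mpr ⟨hy, hgt⟩))).2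
          (lt_irrefl y)
    exact absurd h.symm (Nat.ne_of_lt (Finset.card_lt_card hss))

end Aux
/-- Two players with preferences on single items: for any `k ≥ 2` there is a subset of size
at most `⌈(m+k−1)/k⌉ = (m+2k−2)/k` (ℕ-division) that is necessarily worth at least `1/k`
with respect to both. -/
theorem stmt_17 {m : ℕ} (k : ℕ) (hk : 2 ≤ k)
    (Rs1 Rs2 : Fin m → Fin m → Prop)
    (h1 : IsSingPref Rs1) (h2 : IsSingPref Rs2) :
    ∃ T : Finset (Fin m), T.card ≤ (m + 2 * k - 2) / k ∧
      NecWorth k Rs1 T ∧ NecWorth k Rs2 T := by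
  classical
  have hkpos : 0 < k := by omega
  rcases Nat.eq_zero_or_pos m with hm0 | hm
  · subst hm0
    refine ⟨∅, by simp, ?_, ?_⟩ <;>
    · refine ⟨fun _ => ∅, by simp, ?_, ?_⟩
      · ext x; exact absurd x.2 (by omega)
      · intro i R hR _ _
        have : (∅ : Finset (Fin 0))ᶜ = ∅ := by ext x; exact absurd x.2 (by omega)
        exact pref_refl hR ∅
  -- sorted enumeration by Rs1
  haveI : IsTotal (Fin m) Rs1 := ⟨h1.1⟩
  haveI : IsTrans (Fin m) Rs1 := ⟨h1.2⟩
  set l := List.insertionSort Rs1 (univ : Finset (Fin m)).toList with hl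
  have hsort : l.Pairwise Rs1 := List.pairwise_insertionSort Rs1 _
  have hperm : l.Perm (univ : Finset (Fin m)).toList := List.perm_insertionSort _ _
  have hlen : l.length = m := by
    rw [hperm.length_eq, Finset.length_toList, Finset.card_univ, Fintype.card_fin]
  have hnd : l.Nodup := hperm.nodup_iff.mpr (Finset.nodup_toList _)
  set f : Fin m → Fin m := fun i => l.get (Fin.cast hlen.symm i) with hf
  have hfinj : Function.Injective f := by
    intro a b hab
    have h3 := List.nodup_iff_injective_get.mp hnd hab
    have h4 := congrArg Fin.val h3
    exact Fin.ext h4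
  have hfbij : Function.Bijective f := Finite.injective_iff_bijective.mp hfinj
  set σ := Equiv.ofBijective f hfbij with hσ
  set pos : Fin m → ℕ := fun x => (σ.symm x : ℕ) with hpos
  have hfp : ∀ x, f (σ.symm x) = x := fun x => σ.apply_symm_apply x
  have hposf : ∀ p : Fin m, pos (f p) = (p : ℕ) := by
    intro p
    simp only [hpos]
    rw [show f p = σ p from rfl, Equiv.symm_apply_apply]
  have hposlt : ∀ x, pos x < m := fun x => (σ.symm x).isLt
  have hposinj : ∀ x y, pos x = pos y → x = y := by
    intro x y h
    have h3 : σ.symm x = σ.symm y := Fin.ext h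
    exact σ.symm.injective h3
  have hRs1lt : ∀ x y, pos x < pos y → Rs1 x y := by
    intro x y h
    have h3 : Rs1 (f (σ.symm x)) (f (σ.symm y)) := by
      apply List.Pairwise.rel_get_of_lt hsort
      exact h
    rwa [hfp x, hfp y] at h3
  -- blocks
  set blk : Fin m → ℕ := fun x => (pos x + (k - 1)) / k with hblk
  have hblk_mono : ∀ x y : Fin m, pos x ≤ pos y → blk x ≤ blk y :=
    fun x y h => Nat.div_le_div_right (by omega)
  have hblkRs1 : ∀ x y : Fin m, blk x < blk y → Rs1 x y := by
    intro x y h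
    apply hRs1lt
    by_contra hle
    push_neg at hle
    exact absurd (hblk_mono y x hle) (by omega)
  set B : ℕ → Finset (Fin m) := fun j => univ.filter (fun x => blk x = j) with hB
  have hmemB : ∀ x : Fin m, x ∈ B (blk x) :=
    fun x => Finset.mem_filter.mpr ⟨Finset.mem_univ x, rfl⟩
  have hex : ∀ j : ℕ, ∃ a : Fin m, (B j).Nonempty → a ∈ B j ∧ ∀ b ∈ B j, Rs2 a b := by
    intro j
    by_cases h : (B j).Nonempty
    · obtain ⟨a, ha, hmax⟩ := exists_max h2 (B j) h
      exact ⟨a, fun _ => ⟨ha, hmax⟩⟩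
    · exact ⟨f ⟨0, hm⟩, fun hh => absurd hh h⟩
  choose c hc using hex
  set T : Finset (Fin m) := (univ.image blk).image c with hT
  -- card bound
  have hTcard : T.card ≤ (m + 2 * k - 2) / k := by
    have hb1 : T.card ≤ (univ.image blk).card := Finset.card_image_le
    have hb2 : (univ.image blk) ⊆ Finset.range ((m + k - 2) / k + 1) := by
      intro j hj
      rw [Finset.mem_image] at hj
      obtain ⟨x, _, rfl⟩ := hj
      rw [Finset.mem_range]
      have h3 := hposlt x
      have h4 : blk x ≤ (m + k - 2) / k := by
        apply Nat.div_le_div_right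
        omega
      omega
    have hb3 := Finset.card_le_card hb2
    rw [Finset.card_range] at hb3
    have h5 : m + k - 2 + k = m + 2 * k - 2 := by omega
    have h6 : (m + k - 2 + k) / k = (m + k - 2) / k + 1 := Nat.add_div_right _ hkpos
    rw [← h5, h6]
    omega
  -- facts about chosen elements
  have hcB : ∀ x : Fin m, c (blk x) ∈ B (blk x) ∧ ∀ b ∈ B (blk x), Rs2 (c (blk x)) b :=
    fun x => hc (blk x) ⟨x, hmemB x⟩
  have hblkc : ∀ x : Fin m, blk (c (blk x)) = blk x :=
    fun x => (Finset.mem_filter.mp (hcB x).1).2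
  have hcmemT : ∀ x : Fin m, c (blk x) ∈ T :=
    fun x => Finset.mem_image_of_mem c (Finset.mem_image_of_mem blk (Finset.mem_univ x))
  have hblk0 : ∀ x : Fin m, blk x = 0 → pos x = 0 := by
    intro x h
    have h3 : pos x + (k - 1) < k := by
      have h' : (pos x + (k - 1)) / k = 0 := h
      rwa [Nat.div_eq_zero_iff_lt hkpos] at h'
    omega
  have hx0T : ∀ x : Fin m, blk x = 0 → x ∈ T := by
    intro x h
    have h2 : pos (c (blk x)) = 0 := hblk0 _ (by rw [hblkc x, h])
    have h3 : pos x = 0 := hblk0 x h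
    have h4 : c (blk x) = x := hposinj _ _ (by rw [h2, h3])
    rw [← h4]; exact hcmemT x
  -- block sizes
  have hBcard : ∀ j : ℕ, 1 ≤ j → (B j).card ≤ k := by
    intro j hj
    have hcard : (B j).card ≤ (Finset.Icc (j * k - (k - 1)) (j * k)).card := by
      apply Finset.card_le_card_of_injOn pos
      · intro x hx
        rw [Finset.mem_coe, hB, Finset.mem_filter] at hx
        have hbx : (pos x + (k - 1)) / k = j := hx.2
        have hge : j * k ≤ pos x + (k - 1) :=
          (Nat.le_div_iff_mul_le hkpos).mp (le_of_eq hbx.symm)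
        have hlt : pos x + (k - 1) < (j + 1) * k :=
          (Nat.div_lt_iff_lt_mul hkpos).mp (by omega)
        have hmul : (j + 1) * k = j * k + k := by rw [Nat.succ_mul]
        rw [Finset.mem_coe, Finset.mem_Icc]
        omega
      · intro a _ b _ h
        exact hposinj a b h
    rw [Nat.card_Icc] at hcard
    have : 1 * k ≤ j * k := Nat.mul_le_mul_right k hj
    omega
  have hleft : ∀ x : Fin m, x ∉ T → ((B (blk x)) \ T).card ≤ k - 1 := by
    intro x hx
    have hj1 : 1 ≤ blk x := by
      by_contra h
      push_neg at h
      exact hx (hx0T x (by omega))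
    have hsub : (B (blk x)) \ T ⊆ (B (blk x)).erase (c (blk x)) := by
      intro z hz
      rw [Finset.mem_sdiff] at hz
      rw [Finset.mem_erase]
      exact ⟨fun he => hz.2 (he ▸ hcmemT x), hz.1⟩
    have h2 := Finset.card_le_card hsub
    rw [Finset.card_erase_of_mem (hcB x).1] at h2
    have := hBcard (blk x) hj1
    omega
  -- partition of the complement
  set part : Fin m → ℕ :=
    fun x => (((B (blk x)) \ T).filter (fun z => z < x)).card with hpart
  have hpartlt : ∀ x : Fin m, x ∉ T → part x < k - 1 := by
    intro x hx
    have hxL : x ∈ (B (blk x)) \ T := Finset.mem_sdiff.mpr ⟨hmemB x, hx⟩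
    have h3 := rank_lt_of_mem hxL
    have h4 := hleft x hx
    simp only [hpart]
    omega
  set P : Fin (k - 1) → Finset (Fin m) :=
    fun i => Tᶜ.filter (fun x => part x = (i : ℕ)) with hP
  have hPmem : ∀ (i : Fin (k - 1)) (x : Fin m), x ∈ P i ↔ x ∉ T ∧ part x = (i : ℕ) := by
    intro i x
    simp only [hP, Finset.mem_filter, Finset.mem_compl]
  have hPdis : ∀ i j : Fin (k - 1), i ≠ j → Disjoint (P i) (P j) := by
    intro i j hij
    rw [Finset.disjoint_left]
    intro x hxi hxj
    rw [hPmem] at hxi hxj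
    exact hij (Fin.ext (by rw [← hxi.2, hxj.2]))
  have hPun : Finset.univ.biUnion P = Tᶜ := by
    ext x
    simp only [Finset.mem_biUnion, Finset.mem_univ, true_and, Finset.mem_compl]
    constructor
    · rintro ⟨i, hi⟩
      exact ((hPmem i x).mp hi).1
    · intro hx
      exact ⟨⟨part x, hpartlt x hx⟩, (hPmem _ x).mpr ⟨hx, rfl⟩⟩
  -- same part & same block implies equal
  have hsame : ∀ (a b : Fin m), a ∉ T → b ∉ T → part a = part b → blk a = blk b → a = b := by
    intro a b ha hb hpab hblkab
    have haL : a ∈ (B (blk a)) \ T := Finset.mem_sdiff.mpr ⟨hmemB a, ha⟩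
    have hbL : b ∈ (B (blk a)) \ T := by
      rw [hblkab]
      exact Finset.mem_sdiff.mpr ⟨hmemB b, hb⟩
    apply rank_inj haL hbL
    have : part b = (((B (blk a)) \ T).filter (fun z => z < b)).card := by
      simp only [hpart, hblkab]
    rw [← this, ← hpab]
  -- surjectivity of blk onto initial segment
  have hsurj : ∀ (x : Fin m) (j : ℕ), j ≤ blk x → ∃ z : Fin m, blk z = j := by
    intro x j hj
    rcases Nat.eq_zero_or_pos j with rfl | hjpos
    · refine ⟨f ⟨0, hm⟩, ?_⟩
      simp only [hblk]
      rw [hposf ⟨0, hm⟩]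
      have hv : ((⟨0, hm⟩ : Fin m) : ℕ) = 0 := rfl
      rw [hv]
      exact Nat.div_eq_of_lt (by omega)
    · have hge : j * k ≤ pos x + (k - 1) := (Nat.le_div_iff_mul_le hkpos).mp hj
      obtain ⟨j', rfl⟩ : ∃ j', j = j' + 1 := ⟨j - 1, by omega⟩
      have hmul : (j' + 1) * k = (j' + 1 - 1) * k + k := by
        simp [Nat.succ_mul]
      have hple : (j' + 1 - 1) * k + 1 ≤ pos x := by omega
      have hpm : (j' + 1 - 1) * k + 1 < m := lt_of_le_of_lt hple (hposlt x)
      refine ⟨f ⟨(j' + 1 - 1) * k + 1, hpm⟩, ?_⟩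
      simp only [hblk]
      rw [hposf ⟨(j' + 1 - 1) * k + 1, hpm⟩]
      have h3 : (j' + 1 - 1) * k + 1 + (k - 1) = (j' + 1) * k := by omega
      rw [h3, Nat.mul_div_cancel (j' + 1) hkpos]
  have hblkcj : ∀ j : ℕ, (B j).Nonempty → blk (c j) = j := by
    intro j hne
    exact (Finset.mem_filter.mp (hc j hne).1).2
  have hcjT : ∀ j : ℕ, (B j).Nonempty → c j ∈ T := by
    intro j hne
    obtain ⟨z, hz⟩ := hne
    rw [hB, Finset.mem_filter] at hz
    rw [hT]
    apply Finset.mem_image_of_mem c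
    rw [← hz.2]
    exact Finset.mem_image_of_mem blk (Finset.mem_univ z)
  have hblk1 : ∀ x : Fin m, x ∉ T → 1 ≤ blk x := by
    intro x hx
    by_contra h
    push_neg at h
    exact hx (hx0T x (by omega))
  refine ⟨T, hTcard, ?_, ?_⟩
  · -- NecWorth for Rs1
    refine ⟨P, hPdis, hPun, ?_⟩
    intro i R hR hresp hcons
    have hBne : ∀ y : Fin m, y ∉ T → (B (blk y - 1)).Nonempty := by
      intro y hy
      obtain ⟨z, hz⟩ := hsurj y (blk y - 1) (by omega)
      exact ⟨z, by rw [hB, Finset.mem_filter]; exact ⟨Finset.mem_univ z, hz⟩⟩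
    apply nec_of_inj h1 (fun y hy => ((hPmem i y).mp hy).1) (fun y => c (blk y - 1))
      ?_ ?_ ?_ R hR hresp hcons
    · intro y hy
      exact hcjT _ (hBne y ((hPmem i y).mp hy).1)
    · intro a ha b hb hab
      have hab' : c (blk a - 1) = c (blk b - 1) := hab
      rw [Finset.mem_coe, hPmem] at ha hb
      have hblka : blk (c (blk a - 1)) = blk a - 1 := hblkcj _ (hBne a ha.1)
      have hblkb : blk (c (blk b - 1)) = blk b - 1 := hblkcj _ (hBne b hb.1)
      have h3 : blk a - 1 = blk b - 1 := by rw [← hblka, ← hblkb, hab']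
      have h4 : blk a = blk b := by
        have := hblk1 a ha.1
        have := hblk1 b hb.1
        omega
      exact hsame a b ha.1 hb.1 (by rw [ha.2, hb.2]) h4
    · intro y hy
      rw [hPmem] at hy
      apply hblkRs1
      rw [hblkcj _ (hBne y hy.1)]
      have := hblk1 y hy.1
      omega
  · -- NecWorth for Rs2
    refine ⟨P, hPdis, hPun, ?_⟩
    intro i R hR hresp hcons
    apply nec_of_inj h2 (fun y hy => ((hPmem i y).mp hy).1) (fun y => c (blk y))
      ?_ ?_ ?_ R hR hresp hcons
    · intro y _
      exact hcmemT y
    · intro a ha b hb hab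
      have hab' : c (blk a) = c (blk b) := hab
      rw [Finset.mem_coe, hPmem] at ha hb
      have h4 : blk a = blk b := by rw [← hblkc a, ← hblkc b, hab']
      exact hsame a b ha.1 hb.1 (by rw [ha.2, hb.2]) h4
    · intro y hy
      exact (hcB y).2 y (hmemB y)
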